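/- Let q1 < q3 with q1, q3 > 0, q1 + q2 + q3 = 1, and let Ψ(n) be the reflected birth-death chain on {0,1,2,...} started at 0 with right-probability q1 and left-probability q3. Then for all n and all k ≥ 0, P(Ψ(n) = k) ≤ 2 (q1/q3)^k. -/

import Mathlib

/-- Pointwise bound for the distribution of the reflected walk: if `p n k` is the
probability that the reflected birth-death chain (right-probability `q1`, left-probability
`q3 > q1`, started at `0`) is at `k` after `n` steps, then `p n k ≤ 2 (q1/q3)^k`. -/
theorem stmt19 (q1 q2 q3 : ℝ) (h1 : 0 < q1) (h3 : 0 < q3) (h13 : q1 < q3)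
    (h2 : 0 ≤ q2) (hsum : q1 + q2 + q3 = 1)
    (p : ℕ → ℕ → ℝ)
    (hp0 : p 0 0 = 1) (hp0' : ∀ k, p 0 (k + 1) = 0)
    (hrec0 : ∀ n, p (n + 1) 0 = (q2 + q3) * p n 0 + q3 * p n 1)
    (hrec : ∀ n k, p (n + 1) (k + 1) = q1 * p n k + q2 * p n (k + 1) + q3 * p n (k + 2)) :
    ∀ n k, p n k ≤ 2 * (q1 / q3) ^ k := by
  set r : ℝ := q1 / q3 with hr
  have hr0 : 0 < r := div_pos h1 h3
  have hr1 : r < 1 := (div_lt_one h3).mpr h13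
  have hq3r : q3 * r = q1 := by rw [hr]; field_simp [h3.ne']
  intro n
  induction n with
  | zero =>
    intro k
    cases k with
    | zero => simp [hp0]
    | succ k =>
      rw [hp0']
      positivity
  | succ n ih =>
    intro k
    cases k with
    | zero =>
      rw [hrec0]
      calc (q2 + q3) * p n 0 + q3 * p n 1
          ≤ (q2 + q3) * (2 * r ^ 0) + q3 * (2 * r ^ 1) := by
            gcongr <;> exact ih _
        _ = 2 * r ^ 0 := by linear_combination 2 * hq3r + 2 * hsum
    | succ k =>
      rw [hrec]
      calc q1 * p n k + q2 * p n (k + 1) + q3 * p n (k + 2)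
          ≤ q1 * (2 * r ^ k) + q2 * (2 * r ^ (k + 1)) + q3 * (2 * r ^ (k + 2)) := by
            gcongr <;> exact ih _
        _ = 2 * r ^ (k + 1) := by
            linear_combination (2 * r ^ (k + 1) - 2 * r ^ k) * hq3r + 2 * r ^ (k + 1) * hsum
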